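/- Let n and α be positive integers with α < n < 2α, and let G be a connected graph of order n and independence number α having a vertex x_0 such that G − x_0 is isomorphic to G(n−1,α). Then x_0 belongs to no maximum independent set of G, and ♯α(G) = g(n−1,α). -/

import Mathlib

open Finset

/-- A finset of vertices is independent in `G`: pairwise non-adjacent. -/
def IsIndepFinset {V : Type*} (G : SimpleGraph V) (s : Finset V) : Prop :=
  ∀ ⦃u⦄, u ∈ s → ∀ ⦃v⦄, v ∈ s → u ≠ v → ¬ G.Adj u v

/-- The independence number of a finite graph. -/
noncomputable def indepNumber {V : Type*} [Fintype V] (G : SimpleGraph V) : ℕ :=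
  sSup {k | ∃ s : Finset V, IsIndepFinset G s ∧ s.card = k}

/-- The number `♯α(G)` of maximum independent sets of `G`. -/
noncomputable def numMaxIndep {V : Type*} [Fintype V] (G : SimpleGraph V) : ℕ :=
  Set.ncard {s : Finset V | IsIndepFinset G s ∧ s.card = indepNumber G}

/-- The number `♯α(G,u)` of maximum independent sets of `G` containing `u`. -/
noncomputable def numMaxIndepOn {V : Type*} [Fintype V] (G : SimpleGraph V) (u : V) : ℕ :=
  Set.ncard {s : Finset V | IsIndepFinset G s ∧ s.card = indepNumber G ∧ u ∈ s}

/-- `g(n,α) = ⌊n/α⌋^(α − n mod α) ⌈n/α⌉^(n mod α)`. -/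
def gFun (n a : ℕ) : ℕ := (n / a) ^ (a - n % a) * ((n + a - 1) / a) ^ (n % a)

/-- `t(n,α) = ∏_{i=1}^{α−1} (|C_i| − 1)`, where `|C_i| = ⌊n/α⌋ + 1` for `i < n mod α`
and `|C_i| = ⌊n/α⌋` otherwise. -/
def tFun (n a : ℕ) : ℕ := ∏ i ∈ Finset.Ico 1 a, (n / a + (if i < n % a then 1 else 0) - 1)

/-- `f(n,α) = g(n−1,α) + t(n,α)`. -/
def fFun (n a : ℕ) : ℕ := gFun (n - 1) a + tFun n a

/-- `G(n,α)`: complement of the Turán graph, i.e. the disjoint union of `α` cliques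
(the residue classes mod `α`), each of order `⌈n/α⌉` or `⌊n/α⌋`. -/
def Ggraph (n a : ℕ) : SimpleGraph (Fin n) where
  Adj v w := v ≠ w ∧ v.val % a = w.val % a
  symm := by constructor; intro v w h; exact ⟨h.1.symm, h.2.symm⟩
  loopless := by constructor; intro v h; exact h.1 rfl

/-- `F(n,α)`: `G(n,α)` plus the edges `x₀x₁, …, x₀x_{α−1}`, where `x_i` is the vertex `i`
of the clique `C_i` (the residue class of `i` mod `α`); `x₀ = 0` is the special cutvertex,
lying in the clique `C₀` of order `⌈n/α⌉`. -/
def Fgraph (n a : ℕ) : SimpleGraph (Fin n) where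
  Adj v w := v ≠ w ∧
    (v.val % a = w.val % a ∨ (v.val = 0 ∧ w.val < a) ∨ (w.val = 0 ∧ v.val < a))
  symm := by constructor; intro v w h; beta_reduce at h ⊢; exact ⟨h.1.symm, by tauto⟩
  loopless := by constructor; intro v h; exact h.1 rfl

lemma gFun_eq_pow (m a : ℕ) (h1 : a ≤ m) (h2 : m + 2 ≤ 2 * a) :
    gFun m a = 2 ^ (m - a) := by
  have ha : 2 ≤ a := by omega
  have hmod : m % a = m - a := by
    rw [Nat.mod_eq_sub_mod h1, Nat.mod_eq_of_lt (by omega)]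
  rcases eq_or_lt_of_le h1 with h | h
  · rw [gFun, ← h, Nat.mod_self, Nat.div_self (by omega : 0 < a)]
    simp
  · have hdiv : m / a = 1 := Nat.div_eq_of_lt_le (by omega) (by omega)
    have hdiv2 : (m + a - 1) / a = 2 := Nat.div_eq_of_lt_le (by omega) (by omega)
    rw [gFun, hdiv, hdiv2, hmod, one_pow, one_mul]

lemma Ggraph_count (m a : ℕ) (h1 : a ≤ m) (h2 : m + 2 ≤ 2 * a) :
    Set.ncard {t : Finset (Fin m) | IsIndepFinset (Ggraph m a) t ∧ t.card = a}
      = 2 ^ (m - a) := by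
  classical
  have ha : 2 ≤ a := by omega
  have hm0 : 0 < m := by omega
  set ρ : ℕ → Fin m := fun k => ⟨k % m, Nat.mod_lt k hm0⟩ with hρ
  have hρval : ∀ k, k < m → (ρ k).val = k := fun k hk => Nat.mod_eq_of_lt hk
  set Φ : Finset ℕ → Finset (Fin m) :=
    fun B => (range a).image (fun r => ρ (if r ∈ B then r + a else r)) with hΦ
  have hk_lt : ∀ (B : Finset ℕ), B ⊆ range (m - a) → ∀ r < a,
      (if r ∈ B then r + a else r) < m := by
    intro B hB r hr
    split
    · next h => have := mem_range.mp (hB h); omega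
    · omega
  have hk_mod : ∀ (B : Finset ℕ) (r : ℕ), r < a → (if r ∈ B then r + a else r) % a = r := by
    intro B r hr
    split
    · rw [Nat.add_mod_right, Nat.mod_eq_of_lt hr]
    · exact Nat.mod_eq_of_lt hr
  have val_cases : ∀ w : Fin m, w.val = w.val % a ∨ w.val = w.val % a + a := by
    intro w
    have hw := w.isLt
    rcases Nat.lt_or_ge w.val a with h | h
    · left; exact (Nat.mod_eq_of_lt h).symm
    · right
      have : w.val % a = w.val - a := by
        rw [Nat.mod_eq_sub_mod h, Nat.mod_eq_of_lt (by omega)]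
      omega
  have hΦmem : ∀ B ∈ (range (m - a)).powerset,
      IsIndepFinset (Ggraph m a) (Φ B) ∧ (Φ B).card = a := by
    intro B hB
    rw [mem_powerset] at hB
    have hres : ∀ r < a, (ρ (if r ∈ B then r + a else r)).val % a = r := by
      intro r hr
      rw [hρval _ (hk_lt B hB r hr)]
      exact hk_mod B r hr
    constructor
    · intro u hu v hv huv hadj
      simp only [hΦ, mem_image, mem_range] at hu hv
      obtain ⟨r, hr, rfl⟩ := hu
      obtain ⟨r', hr', rfl⟩ := hv
      have : r = r' := by
        have h1 := hres r hr
        have h2 := hres r' hr'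
        rw [← h1, ← h2]
        exact hadj.2
      exact huv (by rw [this])
    · rw [hΦ]
      rw [Finset.card_image_of_injOn, card_range]
      intro r hr r' hr' hrr
      rw [mem_coe, mem_range] at hr hr'
      have hA := hres r hr
      have hB' := hres r' hr'
      have hrr' : ρ (if r ∈ B then r + a else r) = ρ (if r' ∈ B then r' + a else r') := hrr
      rw [hrr', hB'] at hA
      omega
  have hΦsurj : ∀ t : Finset (Fin m), IsIndepFinset (Ggraph m a) t → t.card = a →
      ∃ B ∈ (range (m - a)).powerset, Φ B = t := by
    intro t hind hcard
    have hresinj : Set.InjOn (fun w : Fin m => w.val % a) t := by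
      intro w hw w' hw' hww
      by_contra hne
      exact hind (mem_coe.mp hw) (mem_coe.mp hw') hne ⟨hne, hww⟩
    have himg : t.image (fun w : Fin m => w.val % a) = range a := by
      apply Finset.eq_of_subset_of_card_le
      · intro r hr
        obtain ⟨w, _, rfl⟩ := mem_image.mp hr
        exact mem_range.mpr (Nat.mod_lt _ (by omega))
      · rw [Finset.card_image_of_injOn hresinj, hcard, card_range]
    set B : Finset ℕ := (range (m - a)).filter (fun r => ∃ w ∈ t, w.val = r + a) with hBdef
    refine ⟨B, mem_powerset.mpr (filter_subset _ _), ?_⟩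
    have hBsub : B ⊆ range (m - a) := filter_subset _ _
    ext u
    constructor
    · intro hu
      simp only [hΦ, mem_image, mem_range] at hu
      obtain ⟨r, hr, rfl⟩ := hu
      by_cases hrB : r ∈ B
      · obtain ⟨w, hwt, hwval⟩ := (mem_filter.mp hrB).2
        simp only [if_pos hrB]
        have : ρ (r + a) = w := Fin.ext (by rw [hρval _ (hwval ▸ w.isLt)]; omega)
        rwa [this]
      · simp only [if_neg hrB]
        have : r ∈ t.image (fun w : Fin m => w.val % a) := himg ▸ mem_range.mpr hr
        obtain ⟨w, hwt, hwr⟩ := mem_image.mp this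
        rcases val_cases w with h | h
        · have : ρ r = w := Fin.ext (by rw [hρval _ (by omega)]; omega)
          rwa [this]
        · exfalso
          apply hrB
          rw [hBdef, mem_filter, mem_range]
          exact ⟨by have := w.isLt; omega, ⟨w, hwt, by omega⟩⟩
    · intro hu
      have hua : u.val % a < a := Nat.mod_lt _ (by omega)
      simp only [hΦ, mem_image, mem_range]
      refine ⟨u.val % a, hua, ?_⟩
      rcases val_cases u with h | h
      · have hnB : u.val % a ∉ B := by
          intro hB
          obtain ⟨w, hwt, hwval⟩ := (mem_filter.mp hB).2
          have hwu : w ≠ u := by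
            intro hE; rw [hE] at hwval; omega
          exact hind hwt hu hwu ⟨hwu, by rw [hwval, Nat.add_mod_right, Nat.mod_mod_of_dvd _ dvd_rfl]⟩
        simp only [if_neg hnB]
        exact Fin.ext (by rw [hρval _ (by omega)]; omega)
      · have hB : u.val % a ∈ B := by
          rw [hBdef, mem_filter, mem_range]
          exact ⟨by have := u.isLt; omega, ⟨u, hu, by omega⟩⟩
        simp only [if_pos hB]
        exact Fin.ext (by rw [hρval _ (by omega)]; omega)
  have hΦinj : Set.InjOn Φ ((range (m - a)).powerset : Finset (Finset ℕ)) := by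
    intro B1 hB1 B2 hB2 hEq
    rw [mem_coe, mem_powerset] at hB1 hB2
    have key : ∀ (B : Finset ℕ), B ⊆ range (m - a) → ∀ r, r < m - a →
        (r ∈ B ↔ ρ (r + a) ∈ Φ B) := by
      intro B hB r hr
      constructor
      · intro hrB
        simp only [hΦ, mem_image, mem_range]
        exact ⟨r, by omega, by rw [if_pos hrB]⟩
      · intro hmem
        simp only [hΦ, mem_image, mem_range] at hmem
        obtain ⟨r', hr', hEq'⟩ := hmem
        have hklt := hk_lt B hB r' hr'
        have hval : (if r' ∈ B then r' + a else r') = r + a := by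
          have := congrArg Fin.val hEq'
          rw [hρval _ hklt, hρval _ (by omega)] at this
          exact this
        by_cases h : r' ∈ B
        · rw [if_pos h] at hval
          have : r' = r := by omega
          rwa [← this]
        · rw [if_neg h] at hval; omega
    apply Finset.ext
    intro r
    constructor
    · intro h
      have hr := mem_range.mp (hB1 h)
      exact (key B2 hB2 r hr).mpr (hEq ▸ (key B1 hB1 r hr).mp h)
    · intro h
      have hr := mem_range.mp (hB2 h)
      exact (key B1 hB1 r hr).mpr (hEq ▸ (key B2 hB2 r hr).mp h)
  have hset : {t : Finset (Fin m) | IsIndepFinset (Ggraph m a) t ∧ t.card = a}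
      = ↑(((range (m - a)).powerset).image Φ) := by
    ext t
    simp only [Set.mem_setOf_eq, coe_image, Set.mem_image, mem_coe]
    constructor
    · intro ⟨ht1, ht2⟩
      obtain ⟨B, hB, hBt⟩ := hΦsurj t ht1 ht2
      exact ⟨B, hB, hBt⟩
    · rintro ⟨B, hB, rfl⟩
      exact hΦmem B hB
  rw [hset, Set.ncard_coe_finset, Finset.card_image_of_injOn hΦinj, card_powerset, card_range]

/-- Let `α < n < 2α`, and let `G` be a connected graph of order `n` and independence number
`α` with a vertex `x₀` such that `G − x₀ ≅ G(n−1,α)`. Then `x₀` belongs to no maximum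
independent set of `G`, and `♯α(G) = g(n−1,α)`. -/
theorem special_vertex_in_no_maxIndepSet {V : Type*} [Fintype V] (G : SimpleGraph V)
    (n a : ℕ) (ha0 : 0 < a) (han : a < n) (hn2a : n < 2 * a) (hconn : G.Connected)
    (hcard : Fintype.card V = n) (hα : indepNumber G = a) (x₀ : V)
    (hiso : Nonempty ((G.induce ({x₀}ᶜ : Set V)) ≃g Ggraph (n - 1) a)) :
    (∀ s : Finset V, IsIndepFinset G s → s.card = indepNumber G → x₀ ∉ s) ∧
      numMaxIndep G = gFun (n - 1) a := by
  classical
  obtain ⟨e⟩ := hiso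
  set m := n - 1 with hmdef
  have ha2 : 2 ≤ a := by omega
  have ham : a ≤ m := by omega
  have hm2 : m + 2 ≤ 2 * a := by omega
  have hm0 : 0 < m := by omega
  have hmem : ∀ v : V, v ≠ x₀ → v ∈ ({x₀}ᶜ : Set V) :=
    fun v h => Set.mem_compl_singleton_iff.mpr h
  set φ : V → Fin m := fun v => if h : v ≠ x₀ then e ⟨v, hmem v h⟩ else ⟨0, hm0⟩ with hφ
  have hφeq : ∀ (v : V) (h : v ≠ x₀), φ v = e ⟨v, hmem v h⟩ := fun v h => dif_pos h
  have adj_iff : ∀ v w : V, v ≠ x₀ → w ≠ x₀ →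
      (G.Adj v w ↔ (Ggraph m a).Adj (φ v) (φ w)) := by
    intro v w hv hw
    rw [hφeq v hv, hφeq w hw, SimpleGraph.Iso.map_adj_iff]
    exact Iff.rfl
  have φ_inj : ∀ v w : V, v ≠ x₀ → w ≠ x₀ → φ v = φ w → v = w := by
    intro v w hv hw h
    rw [hφeq v hv, hφeq w hw] at h
    have := e.toEquiv.injective h
    exact congrArg Subtype.val this
  -- Part 1: x₀ lies in no maximum independent set
  have part1 : ∀ s : Finset V, IsIndepFinset G s → s.card = a → x₀ ∉ s := by
    intro s hind hcard hx₀s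
    set s' := s.erase x₀ with hs'
    have hcard' : s'.card = a - 1 := by rw [hs', card_erase_of_mem hx₀s, hcard]
    have hne : ∀ v ∈ s', v ≠ x₀ := fun v hv => ne_of_mem_erase hv
    have hresinj : Set.InjOn (fun v => (φ v).val % a) s' := by
      intro v hv w hw hvw
      rw [mem_coe] at hv hw
      by_contra hne'
      have hadj : ¬ G.Adj v w := hind (mem_of_mem_erase hv) (mem_of_mem_erase hw) hne'
      have hφne : φ v ≠ φ w := fun h => hne' (φ_inj v w (hne v hv) (hne w hw) h)
      exact hadj ((adj_iff v w (hne v hv) (hne w hw)).mpr ⟨hφne, hvw⟩)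
    set R := s'.image (fun v => (φ v).val % a) with hR
    have hRcard : R.card = a - 1 := by
      rw [hR, Finset.card_image_of_injOn hresinj, hcard']
    have hRsub : R ⊆ range a := by
      intro r hr
      obtain ⟨v, _, rfl⟩ := mem_image.mp hr
      exact mem_range.mpr (Nat.mod_lt _ (by omega))
    set S := (range a).filter (fun r => m ≤ r + a) with hS
    have hScard : S.card = 2 * a - m := by
      have hE : S = Ico (m - a) a := by
        ext r
        rw [hS, mem_filter, mem_range, Finset.mem_Ico]
        omega
      rw [hE, Nat.card_Ico]
      omega
    have hinter : (R ∩ S).Nonempty := by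
      rw [← Finset.card_pos]
      have hsub : R ∪ S ⊆ range a := union_subset hRsub (filter_subset _ _)
      have h1 := Finset.card_le_card hsub
      have h2 := Finset.card_union_add_card_inter R S
      rw [card_range] at h1
      omega
    obtain ⟨r, hr⟩ := hinter
    obtain ⟨hrR, hrS⟩ := mem_inter.mp hr
    obtain ⟨v, hvs', hvr⟩ := mem_image.mp hrR
    have hvx : v ≠ x₀ := hne v hvs'
    have hmra : m ≤ r + a := (mem_filter.mp hrS).2
    have hval : ∀ w : Fin m, w.val % a = r → w.val = r := by
      intro w hw
      have hwlt := w.isLt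
      rcases Nat.lt_or_ge w.val a with h | h
      · rw [Nat.mod_eq_of_lt h] at hw; omega
      · have : w.val % a = w.val - a := by
          rw [Nat.mod_eq_sub_mod h, Nat.mod_eq_of_lt (by omega)]
        omega
    have hsingle : ∀ w : Fin m, w.val % a = r → w = φ v := by
      intro w hw
      exact Fin.ext (by rw [hval w hw, hval (φ v) hvr])
    have hnbr : ∃ u, G.Adj v u := by
      obtain ⟨p⟩ := hconn.preconnected v x₀
      cases p with
      | nil => exact absurd rfl hvx
      | cons h q => exact ⟨_, h⟩
    obtain ⟨u, hu⟩ := hnbr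
    by_cases hux : u = x₀
    · subst hux
      exact hind (mem_of_mem_erase hvs') hx₀s hvx hu
    · have hadj := (adj_iff v u hvx hux).mp hu
      have hres : (φ u).val % a = r := by rw [← hadj.2, hvr]
      exact hadj.1 ((hsingle (φ u) hres).symm)
  -- Part 2: counting
  have part1' : ∀ s : Finset V, IsIndepFinset G s → s.card = indepNumber G → x₀ ∉ s := by
    intro s h1 h2
    exact part1 s h1 (by rw [h2, hα])
  refine ⟨part1', ?_⟩
  have himg_eq : {t : Finset (Fin m) | IsIndepFinset (Ggraph m a) t ∧ t.card = a}
      = (fun s : Finset V => s.image φ) '' {s | IsIndepFinset G s ∧ s.card = a} := by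
    ext t
    simp only [Set.mem_setOf_eq, Set.mem_image]
    constructor
    · intro ⟨ht1, ht2⟩
      set ψ : Fin m → V := fun w => ((e.symm w : ({x₀}ᶜ : Set V)) : V) with hψ
      have hψx : ∀ w : Fin m, ψ w ≠ x₀ :=
        fun w => Set.mem_compl_singleton_iff.mp (e.symm w).2
      have hψinj : Function.Injective ψ := by
        intro w w' h
        exact e.symm.toEquiv.injective (Subtype.ext h)
      have hφψ : ∀ w : Fin m, φ (ψ w) = w := by
        intro w
        rw [hφeq _ (hψx w)]
        have hsub : (⟨ψ w, hmem _ (hψx w)⟩ : ({x₀}ᶜ : Set V)) = e.symm w := Subtype.ext rfl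
        rw [hsub]
        exact e.apply_symm_apply w
      set s := t.image ψ with hsdef
      have hmem_s : ∀ v ∈ s, ∃ w ∈ t, ψ w = v := fun v hv => mem_image.mp hv
      refine ⟨s, ⟨?_, ?_⟩, ?_⟩
      · intro u hu v hv huv hadj
        obtain ⟨w, hwt, rfl⟩ := mem_image.mp hu
        obtain ⟨w', hwt', rfl⟩ := mem_image.mp hv
        have hww : w ≠ w' := fun h => huv (by rw [h])
        have := (adj_iff _ _ (hψx w) (hψx w')).mp hadj
        rw [hφψ, hφψ] at this
        exact ht1 hwt hwt' hww this
      · rw [hsdef, Finset.card_image_of_injective _ hψinj, ht2]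
      · rw [hsdef, Finset.image_image]
        rw [show φ ∘ ψ = id from funext hφψ, Finset.image_id]
    · rintro ⟨s, ⟨h1, h2⟩, rfl⟩
      have hsx : ∀ v ∈ s, v ≠ x₀ := fun v hv hE => part1 s h1 h2 (hE ▸ hv)
      constructor
      · intro u hu w hw huw hadj
        obtain ⟨v1, hv1, rfl⟩ := mem_image.mp hu
        obtain ⟨v2, hv2, rfl⟩ := mem_image.mp hw
        have hv12 : v1 ≠ v2 := fun h => huw (by rw [h])
        exact h1 hv1 hv2 hv12 ((adj_iff v1 v2 (hsx v1 hv1) (hsx v2 hv2)).mpr hadj)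
      · rw [Finset.card_image_of_injOn, h2]
        intro v1 hv1 v2 hv2 h
        exact φ_inj v1 v2 (hsx v1 (mem_coe.mp hv1)) (hsx v2 (mem_coe.mp hv2)) h
  have hinjOn : Set.InjOn (fun s : Finset V => s.image φ)
      {s : Finset V | IsIndepFinset G s ∧ s.card = a} := by
    intro s1 hs1 s2 hs2 hEq
    have hEq' : s1.image φ = s2.image φ := hEq
    obtain ⟨h11, h12⟩ := hs1
    obtain ⟨h21, h22⟩ := hs2
    have hx1 : ∀ v ∈ s1, v ≠ x₀ := fun v hv hE => part1 s1 h11 h12 (hE ▸ hv)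
    have hx2 : ∀ v ∈ s2, v ≠ x₀ := fun v hv hE => part1 s2 h21 h22 (hE ▸ hv)
    ext v
    constructor
    · intro hv
      have : φ v ∈ s2.image φ := by rw [← hEq']; exact mem_image_of_mem φ hv
      obtain ⟨v', hv', h⟩ := mem_image.mp this
      rwa [φ_inj v' v (hx2 v' hv') (hx1 v hv) h] at hv'
    · intro hv
      have : φ v ∈ s1.image φ := by rw [hEq']; exact mem_image_of_mem φ hv
      obtain ⟨v', hv', h⟩ := mem_image.mp this
      rwa [φ_inj v' v (hx1 v' hv') (hx2 v hv) h] at hv'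
  have hcount := Ggraph_count m a ham hm2
  rw [himg_eq, Set.ncard_image_of_injOn hinjOn] at hcount
  rw [numMaxIndep, hα, gFun_eq_pow m a ham hm2]
  exact hcount
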